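/- For every k ≥ 1, the centered objective satisfies Δ_k ≤ γ²·(‖x_0 − x⋆‖² + E_k)/(2·β_k·(k+1)²). -/

import Mathlib

open RealInnerProductSpace Finset

section Aux
variable {E : Type*} [NormedAddCommGroup E] [InnerProductSpace ℝ E] [CompleteSpace E]

lemma fista_grad_convex_ineq {L : E → ℝ} (hLconv : ConvexOn ℝ Set.univ L)
    {g w : E} (hg : HasGradientAt L g w) (z : E) :
    L w + ⟪z - w, g⟫ ≤ L z := by
  have hline : ConvexOn ℝ Set.univ (fun t : ℝ => L (t • (z - w) + w)) := by
    have h := hLconv.comp_affineMap (AffineMap.lineMap w z : ℝ →ᵃ[ℝ] E)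
    simp only [Set.preimage_univ] at h
    exact h
  have hφ : HasDerivAt (fun t : ℝ => t • (z - w) + w) (z - w) 0 := by
    simpa using ((hasDerivAt_id (0:ℝ)).smul_const (z - w)).add_const w
  have hd : HasDerivAt (fun t : ℝ => L (t • (z - w) + w)) ⟪z - w, g⟫ 0 := by
    have hF : HasFDerivAt L (InnerProductSpace.toDual ℝ E g) ((0:ℝ) • (z - w) + w) := by
      simpa using hg.hasFDerivAt
    have := hF.comp_hasDerivAt 0 hφ
    rw [real_inner_comm]
    exact this
  have hs := hline.le_slope_of_hasDerivWithinAt_Ioi (Set.mem_univ (0:ℝ))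
    (Set.mem_univ (1:ℝ)) zero_lt_one hd.hasDerivWithinAt
  rw [slope_def_field] at hs
  simp only [one_smul, zero_smul, zero_add, sub_zero, div_one] at hs
  have hzw : z - w + w = z := by abel
  rw [hzw] at hs
  linarith

omit [CompleteSpace E] in
lemma fista_proj_le {C : Set E} (hCconv : Convex ℝ C) (P : E → E)
    (hPmem : ∀ z, P z ∈ C) (hPproj : ∀ z, ∀ y ∈ C, ‖z - P z‖ ≤ ‖z - y‖)
    (z : E) {c : E} (hc : c ∈ C) : ‖P z - c‖ ≤ ‖z - c‖ := by
  have hinf : ‖z - P z‖ = ⨅ w : C, ‖z - w‖ := by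
    haveI : Nonempty C := ⟨⟨P z, hPmem z⟩⟩
    apply le_antisymm
    · refine le_ciInf fun w => ?_
      exact hPproj z w.1 w.2
    · have hbdd : BddBelow (Set.range fun w : C => ‖z - (w : E)‖) :=
        ⟨0, by rintro _ ⟨w, rfl⟩; exact norm_nonneg _⟩
      exact ciInf_le hbdd ⟨P z, hPmem z⟩
  have hvar := (norm_eq_iInf_iff_real_inner_le_zero hCconv (hPmem z)).mp hinf c hc
  have hsq : ‖P z - c‖ ^ 2 ≤ ‖z - c‖ ^ 2 := by
    have e : z - c = (z - P z) + (P z - c) := by abel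
    rw [e, norm_add_sq_real]
    have : ⟪z - P z, P z - c⟫ = - ⟪z - P z, c - P z⟫ := by
      rw [← inner_neg_right]; congr 1; abel
    nlinarith [norm_nonneg (z - P z), sq_nonneg ‖z - P z‖]
  have h1 := norm_nonneg (P z - c)
  have h2 := norm_nonneg (z - c)
  nlinarith

omit [CompleteSpace E] in
lemma fista_combo (θ : ℝ) (aw ax x' s : E) :
    θ * (θ - 1) * (‖aw - x'‖ ^ 2 - ‖ax - x'‖ ^ 2)
      + θ * (‖aw - s‖ ^ 2 - ‖ax - s‖ ^ 2)
    = ‖θ • aw - (θ - 1) • x' - s‖ ^ 2 - ‖θ • ax - (θ - 1) • x' - s‖ ^ 2 := by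
  simp only [← real_inner_self_eq_norm_sq, inner_sub_left, inner_sub_right,
    real_inner_smul_left, real_inner_smul_right]
  simp only [real_inner_comm x' aw, real_inner_comm s aw, real_inner_comm x' ax,
    real_inner_comm s ax, real_inner_comm s x']
  ring

end Aux

lemma fista_sum_succ (f : ℤ → ℝ) (k : ℤ) (hk : 1 ≤ k) :
    ∑ i ∈ Finset.Icc 1 (k+1), f i = (∑ i ∈ Finset.Icc 1 k, f i) + f (k+1) := by
  rw [show Finset.Icc (1:ℤ) (k+1) = insert (k+1) (Finset.Icc 1 k) from ?_,
    Finset.sum_insert (by simp)]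
  · ring
  · ext j; simp [Finset.mem_Icc, Finset.mem_insert]; omega

set_option maxHeartbeats 1000000

/-- FISTA-type bound: with a non-increasing step-size sequence and the
momentum update `θ_i = 1/γ + √(b + θ_{i−1}²)`, for every `k ≥ 1`,
`Δ_k ≤ γ² (‖x_0 − x⋆‖² + E_k)/(2 β_k (k+1)²)`. -/
theorem fista_objective_rate {E : Type*} [NormedAddCommGroup E]
    [InnerProductSpace ℝ E] [FiniteDimensional ℝ E]
    (L R f : E → ℝ) (gradL : E → E)
    (hLconv : ConvexOn ℝ Set.univ L)
    (hLgrad : ∀ x, HasGradientAt L (gradL x) x)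
    (hRconv : ConvexOn ℝ Set.univ R)
    (hf : ∀ x, f x = L x + R x)
    (C : Set E) (hCne : C.Nonempty) (hCcl : IsClosed C) (hCconv : Convex ℝ C)
    (P : E → E) (hPmem : ∀ z, P z ∈ C)
    (hPproj : ∀ z, ∀ y ∈ C, ‖z - P z‖ ≤ ‖z - y‖)
    (γ b : ℝ) (hγ : 2 ≤ γ) (hb0 : 0 ≤ b) (hb1 : b ≤ 1 / 4)
    (β εs θ : ℤ → ℝ)
    (hβpos : ∀ i, 1 ≤ i → 0 < β i) (hεs : ∀ i, 1 ≤ i → 0 ≤ εs i)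
    (hβmono : ∀ i, 2 ≤ i → β i ≤ β (i - 1))
    (hθ0 : θ 0 = 1) (hθ1 : θ 1 = 1)
    (hθ : ∀ i, 2 ≤ i → θ i = 1 / γ + Real.sqrt (b + (θ (i - 1)) ^ 2))
    (x w : ℤ → E)
    (hw : ∀ i, 1 ≤ i →
      w i = P (x (i - 1) + ((θ (i - 1) - 1) / θ i) • (x (i - 1) - x (i - 2))))
    (hprox : ∀ i, 1 ≤ i → ∀ z, R z ≥ R (x i) +
      ⟪z - x i, (β i)⁻¹ • (w i - β i • gradL (w i) - x i)⟫ - (εs i) ^ 2 / (2 * β i))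
    (hmaj : ∀ i, 1 ≤ i → L (x i) ≤ L (w i) + ⟪x i - w i, gradL (w i)⟫
      + ‖x i - w i‖ ^ 2 / (2 * β i))
    (hxC : ∀ i, 0 ≤ i → x i ∈ C)
    (xstar : E) (hxstarC : xstar ∈ C) (hmin : ∀ z, f xstar ≤ f z) :
    ∀ k : ℤ, 1 ≤ k →
      f (x k) - f xstar ≤
        γ ^ 2 * (‖x 0 - xstar‖ ^ 2 + ∑ i ∈ Finset.Icc 1 k, (θ i) ^ 2 * (εs i) ^ 2)
          / (2 * β k * ((k : ℝ) + 1) ^ 2) := by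
  have hγ0 : (0:ℝ) < γ := by linarith
  have hΔ0 : ∀ i : ℤ, 0 ≤ f (x i) - f xstar := fun i => sub_nonneg.2 (hmin _)
  -- θ basic bounds
  have hθge : ∀ i : ℤ, 1 ≤ i → 1 ≤ θ i ∧ ((i:ℝ) + 1) ≤ γ * θ i := by
    refine fun i => Int.le_induction
      (motive := fun j _ => 1 ≤ θ j ∧ ((j:ℝ) + 1) ≤ γ * θ j) ?_ ?_ i
    · refine ⟨le_of_eq hθ1.symm, ?_⟩
      rw [hθ1]; push_cast; linarith
    · intro n hn ih
      have h2 : (2:ℤ) ≤ n + 1 := by omega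
      have hrec := hθ (n+1) h2
      simp only [add_sub_cancel_right] at hrec
      have hn1 : (1:ℝ) ≤ θ n := ih.1
      have hsq : θ n ≤ Real.sqrt (b + θ n ^ 2) := by
        rw [Real.le_sqrt (by linarith) (by positivity)]
        linarith
      have hinvγ : (0:ℝ) < 1/γ := by positivity
      constructor
      · rw [hrec]; linarith
      · rw [hrec, mul_add, mul_one_div, div_self (ne_of_gt hγ0)]
        push_cast
        have h3 : γ * θ n ≤ γ * Real.sqrt (b + θ n ^ 2) :=
          mul_le_mul_of_nonneg_left hsq (le_of_lt hγ0)
        linarith [ih.2]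
  -- θ recursion inequality
  have hθθ : ∀ i : ℤ, 2 ≤ i → θ i * (θ i - 1) ≤ θ (i-1) ^ 2 := by
    intro i hi
    have hrec := hθ i hi
    have hge1 : 1 ≤ θ i := (hθge i (by omega)).1
    have hprev : 1 ≤ θ (i-1) := by
      rcases eq_or_lt_of_le hi with h | h
      · rw [show i - 1 = 1 from by omega, hθ1]
      · exact (hθge (i-1) (by omega)).1
    have hs0 : (0:ℝ) ≤ b + θ (i-1) ^ 2 := by positivity
    have hs2 : Real.sqrt (b + θ (i-1) ^ 2) ^ 2 = b + θ (i-1) ^ 2 := Real.sq_sqrt hs0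
    set s := Real.sqrt (b + θ (i-1) ^ 2) with hsdef
    have hγs : γ * s = γ * θ i - 1 := by
      rw [hrec]; field_simp; ring
    nlinarith [mul_nonneg (sub_nonneg.2 hγ) (sub_nonneg.2 hge1), sq_nonneg (γ - 2),
      mul_nonneg (mul_nonneg hγ0.le (sub_nonneg.2 hγ)) (sub_nonneg.2 hge1)]
  -- the key one-step inequality
  have hkey : ∀ i : ℤ, 1 ≤ i → ∀ z : E,
      2 * β i * (f (x i) - f z) ≤ ‖w i - z‖ ^ 2 - ‖x i - z‖ ^ 2 + εs i ^ 2 := by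
    intro i hi z
    have hc : (0:ℝ) < β i := hβpos i hi
    have hc2 : (0:ℝ) < 2 * β i := by linarith
    set c := β i with hcdef
    set W := w i with hWdef
    set X := x i with hXdef
    set g := gradL (w i) with hgdef
    have hL := fista_grad_convex_ineq hLconv (hLgrad W) z
    have hR := hprox i hi z
    have hM := hmaj i hi
    -- rewrite the inner product in hR
    have e1 : ⟪z - X, c⁻¹ • (W - c • g - X)⟫
        = c⁻¹ * (⟪z - X, W - X⟫ - c * ⟪z - X, g⟫) := by
      rw [real_inner_smul_right]
      congr 1
      simp only [inner_sub_right, real_inner_smul_right]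
      ring
    rw [e1] at hR
    have e2 : c⁻¹ * (⟪z - X, W - X⟫ - c * ⟪z - X, g⟫)
        = (2 * ⟪z - X, W - X⟫ - 2 * c * ⟪z - X, g⟫) / (2 * c) := by
      field_simp
    rw [e2] at hR
    -- turn divisions into products
    have hR' : 2 * ⟪z - X, W - X⟫ - 2 * c * ⟪z - X, g⟫ - εs i ^ 2
        ≤ (R z - R X) * (2 * c) := by
      have h' : (2 * ⟪z - X, W - X⟫ - 2 * c * ⟪z - X, g⟫ - εs i ^ 2) / (2 * c)
          ≤ R z - R X := by
        rw [sub_div]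
        linarith [hR]
      rw [div_le_iff₀ hc2] at h'
      linarith
    have hM' : (L X - L W - ⟪X - W, g⟫) * (2 * c) ≤ ‖X - W‖ ^ 2 := by
      have h' : L X - L W - ⟪X - W, g⟫ ≤ ‖X - W‖ ^ 2 / (2 * c) := by linarith [hM]
      rw [le_div_iff₀ hc2] at h'
      exact h'
    have hL' : (2 * c) * (L W + ⟪z - W, g⟫) ≤ (2 * c) * L z :=
      mul_le_mul_of_nonneg_left hL (by linarith)
    -- inner product cancellation
    have h2 : ⟪X - W, g⟫ - ⟪z - W, g⟫ + ⟪z - X, g⟫ = 0 := by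
      simp only [inner_sub_left]; ring
    have h2' : (2 * c) * (⟪X - W, g⟫ - ⟪z - W, g⟫ + ⟪z - X, g⟫) = 0 := by
      rw [h2, mul_zero]
    -- norm identity
    have h3 : ‖W - z‖ ^ 2 - ‖X - z‖ ^ 2 = ‖X - W‖ ^ 2 - 2 * ⟪z - X, W - X⟫ := by
      simp only [← real_inner_self_eq_norm_sq, inner_sub_left, inner_sub_right]
      simp only [real_inner_comm z W, real_inner_comm z X, real_inner_comm W X]
      ring
    rw [hf, hf, h3]
    nlinarith [hR', hM', hL', h2']
  -- projection step: the tilted w point is closer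
  have hunorm : ∀ i : ℤ, 1 ≤ i →
      ‖θ i • w i - (θ i - 1) • x (i-1) - xstar‖
      ≤ ‖θ (i-1) • x (i-1) - (θ (i-1) - 1) • x (i-2) - xstar‖ := by
    intro i hi
    have hprev0 : 1 ≤ θ i := by
      rcases eq_or_lt_of_le hi with h | h
      · rw [← h, hθ1]
      · exact (hθge i hi).1
    have ht0 : (0:ℝ) < θ i := by linarith
    set t := θ i with htdef
    set x' := x (i-1) with hx'def
    set x'' := x (i-2) with hx''def
    set yy := x' + ((θ (i-1) - 1) / t) • (x' - x'') with hyydef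
    have hwi : w i = P yy := hw i hi
    set cc := (1 - t⁻¹) • x' + t⁻¹ • xstar with hccdef
    have hccC : cc ∈ C := by
      apply hCconv (hxC (i-1) (by omega)) hxstarC
      · have : t⁻¹ ≤ 1 := by
          rw [inv_le_one_iff₀]; right; exact hprev0
        linarith
      · positivity
      · ring
    have hA : t • w i - (t - 1) • x' - xstar = t • (P yy - cc) := by
      rw [smul_sub, hccdef, smul_add, smul_smul, smul_smul, hwi]
      rw [mul_inv_cancel₀ (ne_of_gt ht0)]
      rw [mul_sub, mul_one, mul_inv_cancel₀ (ne_of_gt ht0)]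
      module
    have h1' : t • (((θ (i-1) - 1) / t) • (x' - x'')) = (θ (i-1) - 1) • (x' - x'') := by
      rw [smul_smul]
      congr 1
      field_simp
    have h2' : t • cc = (t - 1) • x' + xstar := by
      rw [hccdef, smul_add, smul_smul, smul_smul]
      have e1 : t * (1 - t⁻¹) = t - 1 := by field_simp
      have e2 : t * t⁻¹ = 1 := mul_inv_cancel₀ (ne_of_gt ht0)
      rw [e1, e2, one_smul]
    have hB : t • (yy - cc) = θ (i-1) • x' - (θ (i-1) - 1) • x'' - xstar := by
      rw [smul_sub, hyydef, smul_add, h1', h2']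
      module
    rw [hA, ← hB, norm_smul, norm_smul, Real.norm_eq_abs, abs_of_pos ht0]
    exact mul_le_mul_of_nonneg_left
      (fista_proj_le hCconv P hPmem hPproj yy hccC) (le_of_lt ht0)
  -- the per-step descent inequality
  have hstep : ∀ i : ℤ, 1 ≤ i →
      2 * β i * θ i ^ 2 * (f (x i) - f xstar)
        + ‖θ i • x i - (θ i - 1) • x (i-1) - xstar‖ ^ 2
      ≤ 2 * β i * (θ i * (θ i - 1)) * (f (x (i-1)) - f xstar)
        + ‖θ (i-1) • x (i-1) - (θ (i-1) - 1) • x (i-2) - xstar‖ ^ 2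
        + θ i ^ 2 * εs i ^ 2 := by
    intro i hi
    have hprev0 : 1 ≤ θ i := by
      rcases eq_or_lt_of_le hi with h | h
      · rw [← h, hθ1]
      · exact (hθge i hi).1
    have ht0 : (0:ℝ) ≤ θ i := by linarith
    have ht1 : (0:ℝ) ≤ θ i * (θ i - 1) := mul_nonneg ht0 (by linarith)
    have key1 := hkey i hi (x (i-1))
    have key2 := hkey i hi xstar
    have combo := fista_combo (θ i) (w i) (x i) (x (i-1)) xstar
    have hv := hunorm i hi
    have hv2 : ‖θ i • w i - (θ i - 1) • x (i-1) - xstar‖ ^ 2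
        ≤ ‖θ (i-1) • x (i-1) - (θ (i-1) - 1) • x (i-2) - xstar‖ ^ 2 := by
      have h0 := norm_nonneg (θ i • w i - (θ i - 1) • x (i-1) - xstar)
      nlinarith [norm_nonneg (θ (i-1) • x (i-1) - (θ (i-1) - 1) • x (i-2) - xstar)]
    have k1 := mul_le_mul_of_nonneg_left key1 ht1
    have k2 := mul_le_mul_of_nonneg_left key2 ht0
    nlinarith [k1, k2, combo, hv2]
  -- telescoping
  have htel : ∀ k : ℤ, 1 ≤ k →
      2 * β k * θ k ^ 2 * (f (x k) - f xstar)
        + ‖θ k • x k - (θ k - 1) • x (k-1) - xstar‖ ^ 2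
      ≤ ‖x 0 - xstar‖ ^ 2 + ∑ i ∈ Finset.Icc 1 k, θ i ^ 2 * εs i ^ 2 := by
    refine fun k => Int.le_induction
      (motive := fun j _ => 2 * β j * θ j ^ 2 * (f (x j) - f xstar)
        + ‖θ j • x j - (θ j - 1) • x (j-1) - xstar‖ ^ 2
      ≤ ‖x 0 - xstar‖ ^ 2 + ∑ i ∈ Finset.Icc 1 j, θ i ^ 2 * εs i ^ 2) ?_ ?_ k
    ·
      have h := hstep 1 le_rfl
      simp only [show (1:ℤ) - 1 = 0 from rfl, hθ1, hθ0, sub_self, zero_smul,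
        sub_zero, one_smul] at h ⊢
      rw [show Finset.Icc (1:ℤ) 1 = {1} from Finset.Icc_self 1, Finset.sum_singleton,
        hθ1]
      nlinarith [h]
    · intro n hn ih
      have h := hstep (n+1) (by omega)
      simp only [add_sub_cancel_right, show n + (1:ℤ) - 2 = n - 1 from by ring] at h
      have hA : θ (n+1) * (θ (n+1) - 1) ≤ θ n ^ 2 := by
        have := hθθ (n+1) (by omega)
        simpa using this
      have hB : β (n+1) ≤ β n := by
        have := hβmono (n+1) (by omega)
        simpa using this
      have hβ1 : (0:ℝ) < β (n+1) := hβpos (n+1) (by omega)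
      have hΔ : (0:ℝ) ≤ f (x n) - f xstar := hΔ0 n
      have hθn1 : 1 ≤ θ (n+1) := (hθge (n+1) (by omega)).1
      have hmid : 2 * β (n+1) * (θ (n+1) * (θ (n+1) - 1)) * (f (x n) - f xstar)
          ≤ 2 * β n * θ n ^ 2 * (f (x n) - f xstar) := by
        nlinarith [mul_nonneg (mul_nonneg hΔ (sq_nonneg (θ n))) (sub_nonneg.2 hB),
          mul_nonneg (mul_nonneg hΔ hβ1.le) (sub_nonneg.2 hA)]
      simp only [add_sub_cancel_right]
      rw [fista_sum_succ _ n hn]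
      linarith [h, ih, hmid]
  -- conclusion
  intro k hk
  have hQ := htel k hk
  have hθk := hθge k hk
  have hβk := hβpos k hk
  have hk1 : (0:ℝ) < (k:ℝ) + 1 := by
    have : (1:ℝ) ≤ (k:ℝ) := by exact_mod_cast hk
    linarith
  have hsum0 : (0:ℝ) ≤ ∑ i ∈ Finset.Icc 1 k, θ i ^ 2 * εs i ^ 2 :=
    Finset.sum_nonneg fun i _ => by positivity
  rw [le_div_iff₀ (by positivity : (0:ℝ) < 2 * β k * ((k:ℝ) + 1) ^ 2)]
  have hsq : ((k:ℝ) + 1) ^ 2 ≤ (γ * θ k) ^ 2 := by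
    have := hθk.2
    nlinarith
  have h1 : 2 * β k * θ k ^ 2 * (f (x k) - f xstar)
      ≤ ‖x 0 - xstar‖ ^ 2 + ∑ i ∈ Finset.Icc 1 k, θ i ^ 2 * εs i ^ 2 := by
    nlinarith [sq_nonneg ‖θ k • x k - (θ k - 1) • x (k-1) - xstar‖, hQ]
  nlinarith [mul_nonneg (mul_nonneg (hΔ0 k) hβk.le) (sub_nonneg.2 hsq),
    mul_nonneg (sq_nonneg γ) (sub_nonneg.2 h1),
    sq_nonneg ‖x 0 - xstar‖, hsum0]
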